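/- The polynomial R_<^ν(k;λ,μ) satisfies R_<^ν(k;λ,μ) = −R_<^ν(k;−λ−1−(ν₁+ν₂),μ). -/

import Mathlib

open Complex

/-- The rank-2 character `φ(u) = sinh((d+1)u/2)/sinh(u/2)` where `d = ν₁ - ν₂`. -/
noncomputable def phiC (d : ℤ) (u : ℂ) : ℂ :=
  Complex.sinh (((d : ℂ) + 1) * u / 2) / Complex.sinh (u / 2)

/-- `φ̇ = 2 φ'`. -/
noncomputable def phiDot (d : ℤ) (u : ℂ) : ℂ := 2 * deriv (phiC d) u

/-- `φ̈ = 2 φ̇' = 4 φ''`. -/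
noncomputable def phiDDot (d : ℤ) (u : ℂ) : ℂ := 2 * deriv (fun y => phiDot d y) u


/-- `R_<^ν(k;λ,μ)`, with numerator `(e^{u(λ+μ+1)} − e^{u(λ−μ+k+2)+δφ̇(u)})
e^{u(ν₁+ν₂)/2}(2k+4+δφ̈(u))^g`. -/
noncomputable def Rlt (g k : ℕ) (ν₁ ν₂ : ℤ) (ε : ℝ) (l m : ℤ) : ℂ :=
  (-1 : ℂ) ^ g *
    deriv (fun δ : ℂ =>
      (2 * (Real.pi : ℂ) * Complex.I)⁻¹ *
        ∮ u in C(0, ε),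
          (Complex.exp (u * ((l : ℂ) + (m : ℂ) + 1)) -
                Complex.exp (u * ((l : ℂ) - (m : ℂ) + (k : ℂ) + 2) + δ * phiDot (ν₁ - ν₂) u)) *
              Complex.exp (u * ((ν₁ : ℂ) + (ν₂ : ℂ)) / 2) *
              (2 * (k : ℂ) + 4 + δ * phiDDot (ν₁ - ν₂) u) ^ g /
            ((2 * Complex.sinh (u / 2)) ^ (2 * g) *
              (1 - Complex.exp (u * ((k : ℂ) + 2) + δ * phiDot (ν₁ - ν₂) u)))) 0


/-- Substituting `u ↦ -u` in a circle integral around `0` flips the sign. -/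
lemma circleIntegral_comp_neg (f : ℂ → ℂ) (ε : ℝ) :
    (∮ u in C(0, ε), f (-u)) = -∮ u in C(0, ε), f u := by
  have key : ∀ θ : ℝ, circleMap 0 ε (θ + Real.pi) = -circleMap 0 ε θ := by
    intro θ
    simp [circleMap, add_mul, Complex.exp_add, Complex.exp_pi_mul_I]
  have hper : Function.Periodic
      (fun θ : ℝ => deriv (circleMap 0 ε) θ • f (circleMap 0 ε θ)) (2 * Real.pi) := by
    intro θ
    simp only [deriv_circleMap, (periodic_circleMap 0 ε) θ]
  calc (∮ u in C(0, ε), f (-u))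
      = ∫ θ in (0:ℝ)..2 * Real.pi, deriv (circleMap 0 ε) θ • f (-circleMap 0 ε θ) := rfl
    _ = ∫ θ in (0:ℝ)..2 * Real.pi,
          -(deriv (circleMap 0 ε) (θ + Real.pi) • f (circleMap 0 ε (θ + Real.pi))) := by
        refine intervalIntegral.integral_congr fun θ _ => ?_
        rw [deriv_circleMap, deriv_circleMap, key θ]
        rw [neg_mul, neg_smul, neg_neg]
    _ = -∫ θ in (0:ℝ)..2 * Real.pi,
          deriv (circleMap 0 ε) (θ + Real.pi) • f (circleMap 0 ε (θ + Real.pi)) := by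
        rw [intervalIntegral.integral_neg]
    _ = -∫ θ in (0 + Real.pi : ℝ)..2 * Real.pi + Real.pi,
          deriv (circleMap 0 ε) θ • f (circleMap 0 ε θ) := by
        congr 1
        exact intervalIntegral.integral_comp_add_right
          (fun θ => deriv (circleMap 0 ε) θ • f (circleMap 0 ε θ)) Real.pi
    _ = -∮ u in C(0, ε), f u := by
        have := hper.intervalIntegral_add_eq Real.pi 0
        simp only [zero_add] at this ⊢
        rw [show (2 * Real.pi + Real.pi : ℝ) = Real.pi + 2 * Real.pi by ring, this]
        rfl

lemma circleIntegral_comp_neg' (f₁ f₂ : ℂ → ℂ) (ε : ℝ) (h : ∀ u, f₁ u = f₂ (-u)) :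
    (∮ u in C(0, ε), f₁ u) = -∮ u in C(0, ε), f₂ u := by
  rw [funext h]; exact circleIntegral_comp_neg f₂ ε

lemma phiC_even (d : ℤ) (u : ℂ) : phiC d (-u) = phiC d u := by
  unfold phiC
  rw [show ((d:ℂ) + 1) * -u / 2 = -(((d:ℂ) + 1) * u / 2) by ring,
    show -u / 2 = -(u / 2) by ring, Complex.sinh_neg, Complex.sinh_neg, neg_div_neg_eq]

lemma phiDot_neg (d : ℤ) (u : ℂ) : phiDot d (-u) = -phiDot d u := by
  have h : deriv (fun x => phiC d (-x)) u = -deriv (phiC d) (-u) := deriv_comp_neg _ _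
  simp only [phiC_even] at h
  unfold phiDot
  rw [← neg_neg (deriv (phiC d) (-u)), ← h]
  ring

lemma phiDDot_even (d : ℤ) (u : ℂ) : phiDDot d (-u) = phiDDot d u := by
  have h : deriv (fun x => phiDot d (-x)) u = -deriv (phiDot d) (-u) := deriv_comp_neg _ _
  simp only [phiDot_neg, deriv.fun_neg] at h
  unfold phiDDot
  rw [show (fun y => phiDot d y) = phiDot d from rfl, ← neg_neg (deriv (phiDot d) (-u)), ← h]
  ring

lemma key_alg (u N L mc kc δ D S C : ℂ) :
    (Complex.exp (u * ((-L - 1 - N) + mc + 1)) -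
        Complex.exp (u * ((-L - 1 - N) - mc + kc + 2) + δ * D)) *
      Complex.exp (u * N / 2) * C / (S * (1 - Complex.exp (u * (kc + 2) + δ * D)))
  = (Complex.exp (-u * (L + mc + 1)) -
        Complex.exp (-u * (L - mc + kc + 2) + δ * -D)) *
      Complex.exp (-u * N / 2) * C / (S * (1 - Complex.exp (-u * (kc + 2) + δ * -D))) := by
  set Y : ℂ := u * (kc + 2) + δ * D with hY
  have hE : (-Complex.exp (-Y)) ≠ 0 := by simp [Complex.exp_ne_zero]
  have hexp : -u * (kc + 2) + δ * -D = -Y := by rw [hY]; ring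
  have hden : S * (1 - Complex.exp (-Y)) = (-Complex.exp (-Y)) * (S * (1 - Complex.exp Y)) := by
    have : (1 : ℂ) - Complex.exp (-Y) = (-Complex.exp (-Y)) * (1 - Complex.exp Y) := by
      rw [neg_mul, mul_sub, mul_one, ← Complex.exp_add, neg_add_cancel, Complex.exp_zero]; ring
    rw [this]; ring
  have e1 : Complex.exp (-u * (L + mc + 1)) * Complex.exp (-u * N / 2) =
      Complex.exp (-Y) * (Complex.exp (u * ((-L - 1 - N) - mc + kc + 2) + δ * D) *
        Complex.exp (u * N / 2)) := by
    rw [← Complex.exp_add, ← Complex.exp_add, ← Complex.exp_add, hY]; congr 1; ring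
  have e2 : Complex.exp (-u * (L - mc + kc + 2) + δ * -D) * Complex.exp (-u * N / 2) =
      Complex.exp (-Y) * (Complex.exp (u * ((-L - 1 - N) + mc + 1)) *
        Complex.exp (u * N / 2)) := by
    rw [← Complex.exp_add, ← Complex.exp_add, ← Complex.exp_add, hY]; congr 1; ring
  have hnum : (Complex.exp (-u * (L + mc + 1)) -
        Complex.exp (-u * (L - mc + kc + 2) + δ * -D)) * Complex.exp (-u * N / 2) * C =
      (-Complex.exp (-Y)) *
        ((Complex.exp (u * ((-L - 1 - N) + mc + 1)) -
          Complex.exp (u * ((-L - 1 - N) - mc + kc + 2) + δ * D)) *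
          Complex.exp (u * N / 2) * C) := by
    have := e1; have := e2
    calc (Complex.exp (-u * (L + mc + 1)) -
        Complex.exp (-u * (L - mc + kc + 2) + δ * -D)) * Complex.exp (-u * N / 2) * C
        = (Complex.exp (-u * (L + mc + 1)) * Complex.exp (-u * N / 2) -
            Complex.exp (-u * (L - mc + kc + 2) + δ * -D) * Complex.exp (-u * N / 2)) * C := by
          ring
      _ = _ := by rw [e1, e2]; ring
  rw [hexp, hnum, hden, mul_div_mul_left _ _ hE]

/-- `R_<^ν(k;λ,μ) = −R_<^ν(k;−λ−1−(ν₁+ν₂),μ)` (for all small `ε > 0`). -/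
theorem stmt4 (g k : ℕ) (hg : 2 ≤ g) (hk : 0 < k) (ν₁ ν₂ : ℤ) (hν : ν₂ ≤ ν₁) (l m : ℤ) :
    ∃ ε₀ > (0 : ℝ), ∀ ε : ℝ, 0 < ε → ε < ε₀ →
      Rlt g k ν₁ ν₂ ε l m = -Rlt g k ν₁ ν₂ ε (-l - 1 - (ν₁ + ν₂)) m := by
  refine ⟨1, one_pos, fun ε hε _ => ?_⟩
  simp only [Rlt]
  have hfun : (fun δ : ℂ =>
      (2 * (Real.pi : ℂ) * Complex.I)⁻¹ *
        ∮ u in C(0, ε),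
          (Complex.exp (u * (((-l - 1 - (ν₁ + ν₂) : ℤ) : ℂ) + (m : ℂ) + 1)) -
                Complex.exp (u * (((-l - 1 - (ν₁ + ν₂) : ℤ) : ℂ) - (m : ℂ) + (k : ℂ) + 2) +
                  δ * phiDot (ν₁ - ν₂) u)) *
              Complex.exp (u * ((ν₁ : ℂ) + (ν₂ : ℂ)) / 2) *
              (2 * (k : ℂ) + 4 + δ * phiDDot (ν₁ - ν₂) u) ^ g /
            ((2 * Complex.sinh (u / 2)) ^ (2 * g) *
              (1 - Complex.exp (u * ((k : ℂ) + 2) + δ * phiDot (ν₁ - ν₂) u))))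
    = fun δ : ℂ =>
      -((2 * (Real.pi : ℂ) * Complex.I)⁻¹ *
        ∮ u in C(0, ε),
          (Complex.exp (u * ((l : ℂ) + (m : ℂ) + 1)) -
                Complex.exp (u * ((l : ℂ) - (m : ℂ) + (k : ℂ) + 2) +
                  δ * phiDot (ν₁ - ν₂) u)) *
              Complex.exp (u * ((ν₁ : ℂ) + (ν₂ : ℂ)) / 2) *
              (2 * (k : ℂ) + 4 + δ * phiDDot (ν₁ - ν₂) u) ^ g /
            ((2 * Complex.sinh (u / 2)) ^ (2 * g) *
              (1 - Complex.exp (u * ((k : ℂ) + 2) + δ * phiDot (ν₁ - ν₂) u)))) := by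
    funext δ
    have hcirc : (∮ u in C(0, ε),
        (Complex.exp (u * (((-l - 1 - (ν₁ + ν₂) : ℤ) : ℂ) + (m : ℂ) + 1)) -
              Complex.exp (u * (((-l - 1 - (ν₁ + ν₂) : ℤ) : ℂ) - (m : ℂ) + (k : ℂ) + 2) +
                δ * phiDot (ν₁ - ν₂) u)) *
            Complex.exp (u * ((ν₁ : ℂ) + (ν₂ : ℂ)) / 2) *
            (2 * (k : ℂ) + 4 + δ * phiDDot (ν₁ - ν₂) u) ^ g /
          ((2 * Complex.sinh (u / 2)) ^ (2 * g) *
            (1 - Complex.exp (u * ((k : ℂ) + 2) + δ * phiDot (ν₁ - ν₂) u))))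
      = -∮ u in C(0, ε),
        (Complex.exp (u * ((l : ℂ) + (m : ℂ) + 1)) -
              Complex.exp (u * ((l : ℂ) - (m : ℂ) + (k : ℂ) + 2) +
                δ * phiDot (ν₁ - ν₂) u)) *
            Complex.exp (u * ((ν₁ : ℂ) + (ν₂ : ℂ)) / 2) *
            (2 * (k : ℂ) + 4 + δ * phiDDot (ν₁ - ν₂) u) ^ g /
          ((2 * Complex.sinh (u / 2)) ^ (2 * g) *
            (1 - Complex.exp (u * ((k : ℂ) + 2) + δ * phiDot (ν₁ - ν₂) u))) := by
      refine circleIntegral_comp_neg' _ _ ε fun u => ?_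
      rw [phiDot_neg, phiDDot_even, show (-u / 2 : ℂ) = -(u / 2) by ring, Complex.sinh_neg,
        show (2 : ℂ) * -Complex.sinh (u / 2) = -(2 * Complex.sinh (u / 2)) by ring,
        Even.neg_pow (even_two_mul g)]
      push_cast
      exact key_alg u ((ν₁ : ℂ) + (ν₂ : ℂ)) (l : ℂ) (m : ℂ) (k : ℂ) δ
        (phiDot (ν₁ - ν₂) u) ((2 * Complex.sinh (u / 2)) ^ (2 * g))
        ((2 * (k : ℂ) + 4 + δ * phiDDot (ν₁ - ν₂) u) ^ g)
    rw [hcirc]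
    ring
  rw [hfun, deriv.fun_neg]
  ring
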